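/- arXiv:2308.01896 — 4 statements merged into one kernel-verified Lean document; each statement's English description precedes it below -/
import Mathlib

section
/- Let q ∈ [1,∞) and let p = (p(j))_{j≥1} be a nonincreasing sequence with p(j) ∈ [0,1/2] and p(j) → 0. Then lim_{n→∞} E‖p̂_n − p‖_q = 0 if and only if ∑_{j≥1} p(j) < ∞. Moreover, if ∑_{j≥1} p(j) = ∞, then ‖p̂_n − p‖_q = ∞ almost surely. -/
open MeasureTheory ProbabilityTheory Filter ENNReal

/-- The sequence `p : ℕ → ℝ` (Lean index `j` corresponds to the paper's index `j+1`)
represents a nonincreasing sequence of probabilities in `[0,1/2]` tending to `0`. -/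
def IsProbSeq (p : ℕ → ℝ) : Prop :=
  (∀ j, p j ∈ Set.Icc (0 : ℝ) (1 / 2)) ∧ Antitone p ∧ Tendsto p atTop (nhds 0)

/-- `X i j` is the `j`-th coordinate of the `i`-th sample; the samples follow the product
Bernoulli distribution with parameters `p`. -/
def IsBernoulliProduct {Ω : Type} [MeasurableSpace Ω] (P : Measure Ω)
    (X : ℕ → ℕ → Ω → ℝ) (p : ℕ → ℝ) : Prop :=
  (∀ i j, Measurable (X i j)) ∧
  (∀ i j ω, X i j ω = 0 ∨ X i j ω = 1) ∧
  (∀ i j, P {ω | X i j ω = 1} = ENNReal.ofReal (p j)) ∧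
  iIndepFun (fun ij : ℕ × ℕ => X ij.1 ij.2) P

/-- Empirical mean of coordinate `j` over the first `n` samples. -/
noncomputable def empMean (n : ℕ) {Ω : Type} (X : ℕ → ℕ → Ω → ℝ) (j : ℕ) (ω : Ω) : ℝ :=
  (∑ i ∈ Finset.range n, X i j ω) / n

/-- The `ℓ^q` norm `‖p̂_n - p‖_q = (∑_{j≥1} |p̂_n(j) - p(j)|^q)^{1/q}`, valued in `ℝ≥0∞`
(it is equal to `∞` exactly when the series diverges). -/
noncomputable def lqDev (q : ℝ) (n : ℕ) {Ω : Type} (X : ℕ → ℕ → Ω → ℝ) (p : ℕ → ℝ)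
    (ω : Ω) : ℝ≥0∞ :=
  (∑' j, ENNReal.ofReal (|empMean n X j ω - p j| ^ q)) ^ (1 / q)

section Aux

variable {Ω : Type} [MeasurableSpace Ω] {P : Measure Ω} [IsProbabilityMeasure P]
  {X : ℕ → ℕ → Ω → ℝ} {p : ℕ → ℝ}

lemma aux_X_nonneg (h01 : ∀ i j ω, X i j ω = 0 ∨ X i j ω = 1) (i j : ℕ) (ω : Ω) :
    0 ≤ X i j ω := by
  rcases h01 i j ω with h | h <;> rw [h] <;> norm_num

lemma aux_X_le_one (h01 : ∀ i j ω, X i j ω = 0 ∨ X i j ω = 1) (i j : ℕ) (ω : Ω) :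
    X i j ω ≤ 1 := by
  rcases h01 i j ω with h | h <;> rw [h] <;> norm_num

lemma aux_X_memLp (hme : ∀ i j, Measurable (X i j))
    (h01 : ∀ i j ω, X i j ω = 0 ∨ X i j ω = 1) (i j : ℕ) :
    MemLp (X i j) 2 P := by
  refine MemLp.of_bound (hme i j).aestronglyMeasurable 1 (Filter.Eventually.of_forall fun ω => ?_)
  rw [Real.norm_eq_abs, abs_le]
  constructor
  · linarith [aux_X_nonneg h01 i j ω]
  · exact aux_X_le_one h01 i j ω

lemma aux_X_eq_indicator (h01 : ∀ i j ω, X i j ω = 0 ∨ X i j ω = 1) (i j : ℕ) :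
    X i j = Set.indicator {ω | X i j ω = 1} (fun _ => (1 : ℝ)) := by
  funext ω
  rcases h01 i j ω with h | h <;> simp [Set.indicator_apply, h]

lemma aux_X_measurableSet (hme : ∀ i j, Measurable (X i j)) (i j : ℕ) :
    MeasurableSet {ω | X i j ω = 1} := by
  have : {ω | X i j ω = 1} = X i j ⁻¹' {1} := by ext ω; simp
  rw [this]
  exact (hme i j) (measurableSet_singleton 1)

lemma aux_X_integral (hme : ∀ i j, Measurable (X i j))
    (h01 : ∀ i j ω, X i j ω = 0 ∨ X i j ω = 1)
    (hP1 : ∀ i j, P {ω | X i j ω = 1} = ENNReal.ofReal (p j))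
    (hp0 : ∀ j, 0 ≤ p j) (i j : ℕ) :
    ∫ ω, X i j ω ∂P = p j := by
  have h := aux_X_eq_indicator (X := X) h01 i j
  calc ∫ ω, X i j ω ∂P
      = ∫ ω, Set.indicator {ω | X i j ω = 1} (fun _ => (1 : ℝ)) ω ∂P := by rw [← h]
    _ = (P {ω | X i j ω = 1}).toReal • (1 : ℝ) :=
        integral_indicator_const (1 : ℝ) (aux_X_measurableSet hme i j)
    _ = p j := by rw [hP1 i j, smul_eq_mul, mul_one, ENNReal.toReal_ofReal (hp0 j)]

lemma aux_X_variance (hme : ∀ i j, Measurable (X i j))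
    (h01 : ∀ i j ω, X i j ω = 0 ∨ X i j ω = 1)
    (hP1 : ∀ i j, P {ω | X i j ω = 1} = ENNReal.ofReal (p j))
    (hp0 : ∀ j, 0 ≤ p j) (i j : ℕ) :
    variance (X i j) P ≤ p j := by
  have hsq : (X i j) ^ 2 = X i j := by
    funext ω
    rcases h01 i j ω with h | h <;> simp [h]
  rw [variance_eq_sub (aux_X_memLp hme h01 i j), hsq,
    aux_X_integral hme h01 hP1 hp0 i j]
  nlinarith [sq_nonneg (p j)]

lemma aux_empMean_eq (n j : ℕ) :
    empMean n X j = (n : ℝ)⁻¹ • ∑ i ∈ Finset.range n, X i j := by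
  funext ω
  simp [empMean, Finset.sum_apply, div_eq_inv_mul]

lemma aux_empMean_memLp (hme : ∀ i j, Measurable (X i j))
    (h01 : ∀ i j ω, X i j ω = 0 ∨ X i j ω = 1) (n j : ℕ) :
    MemLp (empMean n X j) 2 P := by
  rw [aux_empMean_eq]
  exact (memLp_finset_sum' _ fun i _ => aux_X_memLp hme h01 i j).const_smul _

lemma aux_empMean_integral (hme : ∀ i j, Measurable (X i j))
    (h01 : ∀ i j ω, X i j ω = 0 ∨ X i j ω = 1)
    (hP1 : ∀ i j, P {ω | X i j ω = 1} = ENNReal.ofReal (p j))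
    (hp0 : ∀ j, 0 ≤ p j) {n : ℕ} (hn : 1 ≤ n) (j : ℕ) :
    ∫ ω, empMean n X j ω ∂P = p j := by
  have hi : ∀ i ∈ Finset.range n, Integrable (X i j) P := fun i _ =>
    (aux_X_memLp hme h01 i j).integrable one_le_two
  rw [aux_empMean_eq]
  simp only [Pi.smul_apply, Finset.sum_apply]
  rw [integral_smul, integral_finset_sum _ hi]
  have : ∀ i ∈ Finset.range n, ∫ ω, X i j ω ∂P = p j := fun i _ =>
    aux_X_integral hme h01 hP1 hp0 i j
  rw [Finset.sum_congr rfl this, Finset.sum_const, Finset.card_range]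
  have hn' : (n : ℝ) ≠ 0 := Nat.cast_ne_zero.mpr (by omega)
  rw [smul_eq_mul, nsmul_eq_mul]; field_simp

lemma aux_empMean_variance (hme : ∀ i j, Measurable (X i j))
    (h01 : ∀ i j ω, X i j ω = 0 ∨ X i j ω = 1)
    (hP1 : ∀ i j, P {ω | X i j ω = 1} = ENNReal.ofReal (p j))
    (hInd : iIndepFun (fun ij : ℕ × ℕ => X ij.1 ij.2) P)
    (hp0 : ∀ j, 0 ≤ p j) {n : ℕ} (hn : 1 ≤ n) (j : ℕ) :
    variance (empMean n X j) P ≤ p j / n := by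
  rw [aux_empMean_eq, variance_smul]
  have hvs : variance (∑ i ∈ Finset.range n, X i j) P
      = ∑ i ∈ Finset.range n, variance (X i j) P := by
    refine IndepFun.variance_sum (fun i _ => aux_X_memLp hme h01 i j) ?_
    intro i _ k _ hik
    exact hInd.indepFun (i := (i, j)) (j := (k, j)) (by simp [hik])
  rw [hvs]
  have hsum : ∑ i ∈ Finset.range n, variance (X i j) P ≤ n * p j := by
    calc ∑ i ∈ Finset.range n, variance (X i j) P
        ≤ ∑ i ∈ Finset.range n, p j :=
          Finset.sum_le_sum fun i _ => aux_X_variance hme h01 hP1 hp0 i j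
      _ = n * p j := by rw [Finset.sum_const, Finset.card_range, nsmul_eq_mul]
  have hn' : (0 : ℝ) < n := by exact_mod_cast Nat.pos_of_ne_zero (by omega)
  calc ((n : ℝ)⁻¹) ^ 2 * ∑ i ∈ Finset.range n, variance (X i j) P
      ≤ ((n : ℝ)⁻¹) ^ 2 * (n * p j) := by
        apply mul_le_mul_of_nonneg_left hsum (by positivity)
    _ = p j / n := by field_simp

lemma aux_lint_le_sqrt (hme : ∀ i j, Measurable (X i j))
    (h01 : ∀ i j ω, X i j ω = 0 ∨ X i j ω = 1)
    (hP1 : ∀ i j, P {ω | X i j ω = 1} = ENNReal.ofReal (p j))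
    (hInd : iIndepFun (fun ij : ℕ × ℕ => X ij.1 ij.2) P)
    (hp0 : ∀ j, 0 ≤ p j) {n : ℕ} (hn : 1 ≤ n) (j : ℕ) :
    ∫⁻ ω, ENNReal.ofReal |empMean n X j ω - p j| ∂P
      ≤ ENNReal.ofReal (Real.sqrt (p j / n)) := by
  set f : Ω → ℝ := fun ω => empMean n X j ω - p j with hf
  have hfm : MemLp f 2 P := (aux_empMean_memLp hme h01 n j).sub (memLp_const _)
  have h1 : ∫⁻ ω, ENNReal.ofReal |f ω| ∂P = eLpNorm f 1 P := by
    rw [eLpNorm_one_eq_lintegral_enorm]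
    refine lintegral_congr fun ω => ?_
    rw [Real.enorm_eq_ofReal_abs]
  have h2 : eLpNorm f 1 P ≤ eLpNorm f 2 P :=
    eLpNorm_le_eLpNorm_of_exponent_le one_le_two hfm.aestronglyMeasurable
  have hint : Integrable (fun ω => f ω ^ 2) P := hfm.integrable_sq
  have h3 : eLpNorm f 2 P = (∫⁻ ω, ENNReal.ofReal (f ω ^ 2) ∂P) ^ (1 / 2 : ℝ) := by
    rw [eLpNorm_eq_lintegral_rpow_enorm_toReal two_ne_zero ENNReal.ofNat_ne_top]
    have h2' : ((2 : ℝ≥0∞)).toReal = (2 : ℝ) := by norm_num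
    rw [h2']
    congr 1
    refine lintegral_congr fun ω => ?_
    rw [Real.enorm_eq_ofReal_abs, ENNReal.ofReal_rpow_of_nonneg (abs_nonneg _) (by norm_num),
      Real.rpow_two, sq_abs]
  have h4 : ∫⁻ ω, ENNReal.ofReal (f ω ^ 2) ∂P = ENNReal.ofReal (∫ ω, f ω ^ 2 ∂P) :=
    (ofReal_integral_eq_lintegral_ofReal hint
      (Filter.Eventually.of_forall fun ω => sq_nonneg _)).symm
  have h5 : ∫ ω, f ω ^ 2 ∂P = variance (empMean n X j) P := by
    rw [variance_eq_integral (aux_empMean_memLp hme h01 n j).aestronglyMeasurable.aemeasurable,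
      aux_empMean_integral hme h01 hP1 hp0 hn j]
  have h6 : variance (empMean n X j) P ≤ p j / n :=
    aux_empMean_variance hme h01 hP1 hInd hp0 hn j
  calc ∫⁻ ω, ENNReal.ofReal |f ω| ∂P ≤ eLpNorm f 2 P := h1 ▸ h2
    _ = ENNReal.ofReal (∫ ω, f ω ^ 2 ∂P) ^ (1 / 2 : ℝ) := by rw [h3, h4]
    _ ≤ ENNReal.ofReal (p j / n) ^ (1 / 2 : ℝ) := by
        apply ENNReal.rpow_le_rpow _ (by norm_num)
        exact ENNReal.ofReal_le_ofReal (h5 ▸ h6)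
    _ = ENNReal.ofReal (Real.sqrt (p j / n)) := by
        rw [ENNReal.ofReal_rpow_of_nonneg (div_nonneg (hp0 j) (Nat.cast_nonneg n)) (by norm_num),
          Real.sqrt_eq_rpow]

lemma aux_lint_le_two (hme : ∀ i j, Measurable (X i j))
    (h01 : ∀ i j ω, X i j ω = 0 ∨ X i j ω = 1)
    (hP1 : ∀ i j, P {ω | X i j ω = 1} = ENNReal.ofReal (p j))
    (hp0 : ∀ j, 0 ≤ p j) {n : ℕ} (hn : 1 ≤ n) (j : ℕ) :
    ∫⁻ ω, ENNReal.ofReal |empMean n X j ω - p j| ∂P ≤ ENNReal.ofReal (2 * p j) := by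
  have hEm : Integrable (empMean n X j) P :=
    (aux_empMean_memLp hme h01 n j).integrable one_le_two
  have hint : Integrable (fun ω => |empMean n X j ω - p j|) P := (hEm.sub (integrable_const _)).abs
  have hEnn : ∀ ω, 0 ≤ empMean n X j ω := by
    intro ω
    apply div_nonneg _ (Nat.cast_nonneg n)
    exact Finset.sum_nonneg fun i _ => aux_X_nonneg h01 i j ω
  have h1 : ∫⁻ ω, ENNReal.ofReal |empMean n X j ω - p j| ∂P
      = ENNReal.ofReal (∫ ω, |empMean n X j ω - p j| ∂P) :=
    (ofReal_integral_eq_lintegral_ofReal hint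
      (Filter.Eventually.of_forall fun ω => abs_nonneg _)).symm
  rw [h1]
  apply ENNReal.ofReal_le_ofReal
  have h2 : ∫ ω, |empMean n X j ω - p j| ∂P ≤ ∫ ω, (empMean n X j ω + p j) ∂P := by
    apply integral_mono hint (hEm.add (integrable_const _))
    intro ω
    calc |empMean n X j ω - p j| ≤ |empMean n X j ω| + |p j| := abs_sub _ _
      _ = empMean n X j ω + p j := by rw [abs_of_nonneg (hEnn ω), abs_of_nonneg (hp0 j)]
  calc ∫ ω, |empMean n X j ω - p j| ∂P ≤ ∫ ω, (empMean n X j ω + p j) ∂P := h2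
    _ = p j + p j := by
        rw [integral_add hEm (integrable_const _),
          aux_empMean_integral hme h01 hP1 hp0 hn j, integral_const]
        simp
    _ = 2 * p j := by ring

lemma aux_tsum_rpow_le {q : ℝ} (hq : 1 ≤ q) (b : ℕ → ℝ≥0∞) :
    ∑' j, b j ^ q ≤ (∑' j, b j) ^ q := by
  set S := ∑' j, b j with hS
  have hq0 : (0 : ℝ) < q := lt_of_lt_of_le one_pos hq
  have key : ∀ j, b j ^ q ≤ S ^ (q - 1) * b j := by
    intro j
    have hbS : b j ≤ S := ENNReal.le_tsum j
    rcases eq_or_ne (b j) 0 with h0 | h0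
    · rw [h0, ENNReal.zero_rpow_of_pos hq0]
      exact zero_le
    rcases eq_or_ne (b j) ⊤ with ht | ht
    · have hSt : S = ⊤ := top_le_iff.mp (ht ▸ hbS)
      have hne : (⊤ : ℝ≥0∞) ^ (q - 1) ≠ 0 := by
        rcases lt_or_eq_of_le (by linarith : (0 : ℝ) ≤ q - 1) with h | h
        · rw [ENNReal.top_rpow_of_pos h]; exact ENNReal.top_ne_zero
        · rw [← h, ENNReal.rpow_zero]; exact one_ne_zero
      rw [ht, hSt, ENNReal.top_rpow_of_pos hq0, ENNReal.mul_top hne]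
    · have heq : b j ^ q = b j ^ (q - 1) * b j := by
        nth_rewrite 3 [← ENNReal.rpow_one (b j)]
        rw [← ENNReal.rpow_add _ _ h0 ht]
        norm_num
      rw [heq]
      exact mul_le_mul_left (ENNReal.rpow_le_rpow hbS (by linarith)) _
  calc ∑' j, b j ^ q ≤ ∑' j, S ^ (q - 1) * b j := ENNReal.tsum_le_tsum key
    _ = S ^ (q - 1) * S := by rw [ENNReal.tsum_mul_left]
    _ ≤ S ^ q := by
        rcases eq_or_ne S 0 with h0 | h0
        · simp [h0]
        rcases eq_or_ne S ⊤ with ht | ht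
        · rw [ht, ENNReal.top_rpow_of_pos (by linarith : (0 : ℝ) < q)]
          exact le_top
        · nth_rewrite 2 [← ENNReal.rpow_one S]
          rw [← ENNReal.rpow_add _ _ h0 ht]
          norm_num

lemma aux_lqDev_le (q : ℝ) (hq : 1 ≤ q) (n : ℕ) (ω : Ω) :
    lqDev q n X p ω ≤ ∑' j, ENNReal.ofReal |empMean n X j ω - p j| := by
  have hq0 : q ≠ 0 := by positivity
  have h1 : ∀ j, ENNReal.ofReal (|empMean n X j ω - p j| ^ q)
      = ENNReal.ofReal |empMean n X j ω - p j| ^ q := fun j =>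
    (ENNReal.ofReal_rpow_of_nonneg (abs_nonneg _) (by positivity)).symm
  rw [lqDev]
  simp_rw [h1]
  calc (∑' j, ENNReal.ofReal |empMean n X j ω - p j| ^ q) ^ (1 / q)
      ≤ ((∑' j, ENNReal.ofReal |empMean n X j ω - p j|) ^ q) ^ (1 / q) :=
        ENNReal.rpow_le_rpow (aux_tsum_rpow_le hq _) (by positivity)
    _ = ∑' j, ENNReal.ofReal |empMean n X j ω - p j| := by
        rw [← ENNReal.rpow_mul, mul_one_div_cancel hq0, ENNReal.rpow_one]

lemma aux_measurable_abs (hme : ∀ i j, Measurable (X i j)) (n j : ℕ) :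
    Measurable fun ω => ENNReal.ofReal |empMean n X j ω - p j| := by
  apply Measurable.ennreal_ofReal
  apply Measurable.abs
  apply Measurable.sub _ measurable_const
  apply Measurable.div_const
  exact Finset.measurable_sum _ fun i _ => hme i j

/-- if `∑ p = ∞` then the deviation is a.s. infinite. -/
lemma aux_ae_top {q : ℝ} (hq : 1 ≤ q) (hp : IsProbSeq p)
    (hme : ∀ i j, Measurable (X i j))
    (h01 : ∀ i j ω, X i j ω = 0 ∨ X i j ω = 1)
    (hP1 : ∀ i j, P {ω | X i j ω = 1} = ENNReal.ofReal (p j))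
    (hInd : iIndepFun (fun ij : ℕ × ℕ => X ij.1 ij.2) P)
    (hns : ¬ Summable p) {n : ℕ} (hn : 1 ≤ n) :
    ∀ᵐ ω ∂P, lqDev q n X p ω = ⊤ := by
  have hp0 : ∀ j, 0 ≤ p j := fun j => (hp.1 j).1
  set A : ℕ → Set Ω := fun j => {ω | X 0 j ω = 1} with hA
  have hAm : ∀ j, MeasurableSet (A j) := fun j => aux_X_measurableSet hme 0 j
  -- independence of the events A j
  have hiis : iIndepSet A P := by
    rw [iIndepSet_iff_meas_biInter hAm]
    intro S
    set e : ℕ ↪ ℕ × ℕ := ⟨fun j => (0, j), fun a b h => by simpa using h⟩ with he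
    have h := hInd.meas_biInter (S := S.map e)
      (s := fun ij => X ij.1 ij.2 ⁻¹' {1})
      (fun ij _ => ⟨{1}, measurableSet_singleton 1, rfl⟩)
    have hL : (⋂ ij ∈ S.map e, X ij.1 ij.2 ⁻¹' {1}) = ⋂ j ∈ S, A j := by
      ext ω
      simp only [Set.mem_iInter, Finset.mem_map, he, Function.Embedding.coeFn_mk]
      constructor
      · intro hh j hj
        have := hh (0, j) ⟨j, hj, rfl⟩
        simpa [A] using this
      · rintro hh ij ⟨j, hj, rfl⟩
        exact hh j hj
    have hR : ∏ ij ∈ S.map e, P (X ij.1 ij.2 ⁻¹' {1}) = ∏ j ∈ S, P (A j) := by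
      rw [Finset.prod_map]
      refine Finset.prod_congr rfl fun j _ => rfl
    rw [hL, hR] at h
    exact h
  -- divergence of the sum of probabilities
  have hPA : ∀ j, P (A j) = ENNReal.ofReal (p j) := fun j => hP1 0 j
  have hsumtop : ∑' j, P (A j) = ⊤ := by
    by_contra hne
    apply hns
    have := ENNReal.summable_toReal hne
    refine this.congr fun j => ?_
    rw [hPA j, ENNReal.toReal_ofReal (hp0 j)]
  have hlimsup : P (limsup A atTop) = 1 := measure_limsup_eq_one hAm hiis hsumtop
  have hae : ∀ᵐ ω ∂P, ω ∈ limsup A atTop := by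
    have h := (prob_compl_eq_zero_iff (MeasurableSet.measurableSet_limsup hAm)).mpr hlimsup
    rw [ae_iff]
    exact h
  filter_upwards [hae] with ω hω
  -- for such ω the series diverges
  have hn' : (0 : ℝ) < n := by exact_mod_cast Nat.pos_of_ne_zero (by omega)
  have hfreq : ∃ᶠ j in atTop, ω ∈ A j := mem_limsup_iff_frequently_mem.mp hω
  have hev : ∀ᶠ j in atTop, p j < 1 / (2 * n) :=
    Tendsto.eventually_lt_const (by positivity) hp.2.2
  have hfreq2 : ∃ᶠ j in atTop, ω ∈ A j ∧ p j < 1 / (2 * n) := hfreq.and_eventually hev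
  have hTinf : {j | ω ∈ A j ∧ p j < 1 / (2 * n)}.Infinite :=
    Nat.frequently_atTop_iff_infinite.mp hfreq2
  set c : ℝ≥0∞ := ENNReal.ofReal ((1 / (2 * n)) ^ q) with hc
  have hcpos : c ≠ 0 := by
    rw [hc, ← ENNReal.ofReal_zero, Ne, ENNReal.ofReal_eq_ofReal_iff (by positivity) le_rfl]
    positivity
  have hbig : ∀ j ∈ {j | ω ∈ A j ∧ p j < 1 / (2 * n)},
      c ≤ ENNReal.ofReal (|empMean n X j ω - p j| ^ q) := by
    rintro j ⟨hj1, hj2⟩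
    have hX1 : X 0 j ω = 1 := hj1
    have hsum1 : (1 : ℝ) ≤ ∑ i ∈ Finset.range n, X i j ω := by
      have := Finset.single_le_sum (f := fun i => X i j ω)
        (fun i _ => aux_X_nonneg h01 i j ω) (Finset.mem_range.mpr (by omega : 0 < n))
      simpa [hX1] using this
    have hEm : 1 / (n : ℝ) ≤ empMean n X j ω := by
      simp only [empMean]
      gcongr
    have habs : 1 / (2 * n : ℝ) ≤ |empMean n X j ω - p j| := by
      have : 1 / (2 * n : ℝ) ≤ empMean n X j ω - p j := by
        have h2 : p j ≤ 1 / (2 * n) := le_of_lt hj2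
        have : 1 / (n : ℝ) = 1 / (2 * n) + 1 / (2 * n) := by field_simp; ring
        linarith [hEm]
      calc (1 : ℝ) / (2 * n) ≤ empMean n X j ω - p j := this
        _ ≤ |empMean n X j ω - p j| := le_abs_self _
    rw [hc]
    apply ENNReal.ofReal_le_ofReal
    exact Real.rpow_le_rpow (by positivity) habs (by positivity)
  have htsum : ∑' j, ENNReal.ofReal (|empMean n X j ω - p j| ^ q) = ⊤ := by
    by_contra hne
    have hfin := ENNReal.finite_const_le_of_tsum_ne_top hne hcpos
    exact (hTinf.mono hbig) hfin
  rw [lqDev, htsum]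
  exact ENNReal.top_rpow_of_pos (by positivity)

end Aux

set_option maxHeartbeats 1000000 in
theorem stmt8 (q : ℝ) (hq : 1 ≤ q) (p : ℕ → ℝ) (hp : IsProbSeq p)
    (Ω : Type) [MeasurableSpace Ω] (P : Measure Ω) [IsProbabilityMeasure P]
    (X : ℕ → ℕ → Ω → ℝ) (hX : IsBernoulliProduct P X p) :
    -- E‖p̂_n - p‖_q → 0 if and only if ∑_j p(j) < ∞
    (Tendsto (fun n : ℕ => ∫⁻ ω, lqDev q n X p ω ∂P) atTop (nhds 0) ↔ Summable p) ∧
    -- moreover, if ∑_j p(j) = ∞ then ‖p̂_n - p‖_q = ∞ almost surely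
    (¬ Summable p → ∀ n : ℕ, 1 ≤ n → ∀ᵐ ω ∂P, lqDev q n X p ω = ⊤) := by
  obtain ⟨hme, h01, hP1, hInd⟩ := hX
  have hp0 : ∀ j, 0 ≤ p j := fun j => (hp.1 j).1
  have part2 : ¬ Summable p → ∀ n : ℕ, 1 ≤ n → ∀ᵐ ω ∂P, lqDev q n X p ω = ⊤ :=
    fun hns n hn => aux_ae_top hq hp hme h01 hP1 hInd hns hn
  refine ⟨⟨?_, ?_⟩, part2⟩
  · -- Tendsto → Summable
    intro htend
    by_contra hns
    obtain ⟨N, hN⟩ := eventually_atTop.mp (ENNReal.tendsto_nhds_zero.mp htend 1 one_pos)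
    have hle := hN (max N 1) (le_max_left _ _)
    have htop : ∫⁻ ω, lqDev q (max N 1) X p ω ∂P = ⊤ := by
      have hae := part2 hns (max N 1) (le_max_right _ _)
      rw [lintegral_congr_ae (hae.mono fun ω h => h), lintegral_const]
      simp
    rw [htop] at hle
    exact absurd hle (by simp)
  · -- Summable → Tendsto
    intro hsum
    set F : ℕ → ℕ → ℝ≥0∞ := fun n j => ∫⁻ ω, ENNReal.ofReal |empMean n X j ω - p j| ∂P with hF
    have hlq : ∀ n, ∫⁻ ω, lqDev q n X p ω ∂P ≤ ∑' j, F n j := by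
      intro n
      calc ∫⁻ ω, lqDev q n X p ω ∂P
          ≤ ∫⁻ ω, ∑' j, ENNReal.ofReal |empMean n X j ω - p j| ∂P :=
            lintegral_mono fun ω => aux_lqDev_le q hq n ω
        _ = ∑' j, F n j :=
            lintegral_tsum fun j => (aux_measurable_abs hme n j).aemeasurable
    have hFb : ∀ n j, F n j ≤ ENNReal.ofReal (2 * p j) := by
      intro n j
      rcases Nat.eq_zero_or_pos n with h0 | h1
      · subst h0
        have hz : ∀ ω : Ω, empMean 0 X j ω = 0 := fun ω => by simp [empMean]
        calc F 0 j = ∫⁻ _ω : Ω, ENNReal.ofReal (p j) ∂P := by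
              refine lintegral_congr fun ω => ?_
              rw [hz ω, zero_sub, abs_neg, abs_of_nonneg (hp0 j)]
          _ = ENNReal.ofReal (p j) := by rw [lintegral_const, measure_univ, mul_one]
          _ ≤ ENNReal.ofReal (2 * p j) := ENNReal.ofReal_le_ofReal (by linarith [hp0 j])
      · exact aux_lint_le_two hme h01 hP1 hp0 h1 j
    have hbound : ∑' j, ENNReal.ofReal (2 * p j) ≠ ⊤ := by
      rw [← ENNReal.ofReal_tsum_of_nonneg (fun j => mul_nonneg (by norm_num) (hp0 j))
        (hsum.mul_left 2)]
      exact ENNReal.ofReal_ne_top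
    have hFlim : ∀ j, Tendsto (fun n => F n j) atTop (nhds 0) := by
      intro j
      have hup : ∀ᶠ n in atTop, F n j ≤ ENNReal.ofReal (Real.sqrt (p j / n)) := by
        filter_upwards [eventually_ge_atTop 1] with n hn
        exact aux_lint_le_sqrt hme h01 hP1 hInd hp0 hn j
      have h1 : Tendsto (fun n : ℕ => p j / (n : ℝ)) atTop (nhds 0) :=
        tendsto_const_div_atTop_nhds_zero_nat (p j)
      have h2 : Tendsto (fun n : ℕ => Real.sqrt (p j / n)) atTop (nhds 0) := by
        have := (Real.continuous_sqrt.tendsto 0).comp h1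
        rw [Real.sqrt_zero] at this
        exact this
      have h3 : Tendsto (fun n : ℕ => ENNReal.ofReal (Real.sqrt (p j / n))) atTop (nhds 0) := by
        have := (ENNReal.continuous_ofReal.tendsto 0).comp h2
        rw [ENNReal.ofReal_zero] at this
        exact this
      exact tendsto_of_tendsto_of_tendsto_of_le_of_le' tendsto_const_nhds h3
        (Eventually.of_forall fun n => zero_le) hup
    have key : Tendsto (fun n => ∑' j, F n j) atTop (nhds 0) := by
      have hdc := tendsto_lintegral_of_dominated_convergence
        (μ := MeasureTheory.Measure.count (α := ℕ))
        (F := fun n j => F n j) (f := fun _ => 0)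
        (fun j => ENNReal.ofReal (2 * p j))
        (fun n => measurable_of_countable _)
        (fun n => Filter.Eventually.of_forall (hFb n))
        (by rw [lintegral_count]; exact hbound)
        (Filter.Eventually.of_forall hFlim)
      simp only [lintegral_count, lintegral_zero] at hdc
      exact hdc
    exact tendsto_of_tendsto_of_tendsto_of_le_of_le tendsto_const_nhds key
      (fun n => zero_le) hlq
end

section
/- There exist universal constants c, C > 0 such that for every integer n ≥ 1 and every nonincreasing sequence p = (p(j))_{j≥1} with p(j) ∈ [0,1/2] and p(j) → 0, if p(j) ≤ 1/(2nj) for all j ≥ 1, then c · min(1/n, ∑_{j≥1} p(j)) ≤ Δ_n^+(p) ≤ C · min(1/n, ∑_{j≥1} p(j)). -/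
open MeasureTheory ProbabilityTheory Filter ENNReal

/-- `Δ_n^+(p) = E sup_j [p̂_n(j) - p(j)]₊`. -/
noncomputable def maxDevPlus (n : ℕ) {Ω : Type} [MeasurableSpace Ω] (P : Measure Ω)
    (X : ℕ → ℕ → Ω → ℝ) (p : ℕ → ℝ) : ℝ :=
  ∫ ω, (⨆ j, max (empMean n X j ω - p j) 0) ∂P

set_option linter.unusedSectionVars false
set_option linter.unusedVariables false
set_option maxHeartbeats 1000000

/-! ### Auxiliary analytic lemmas -/

lemma aux_sum_Icc_pow_le (a n : ℕ) (r : ℝ≥0∞) :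
    ∑ k ∈ Finset.Icc a n, r ^ (k - a) ≤ (1 - r)⁻¹ := by
  have h : ∑ k ∈ Finset.Icc a n, r ^ (k - a) = ∑ m ∈ Finset.range (n + 1 - a), r ^ m := by
    apply Finset.sum_nbij' (fun k => k - a) (fun m => m + a)
    · intro k hk
      simp only [Finset.mem_Icc] at hk
      simp only [Finset.mem_range]
      omega
    · intro m hm
      simp only [Finset.mem_range] at hm
      simp only [Finset.mem_Icc]
      omega
    · intro k hk; simp only [Finset.mem_Icc] at hk; omega
    · intro m hm; omega
    · intro k hk; rfl
  rw [h]
  calc ∑ m ∈ Finset.range (n + 1 - a), r ^ m ≤ ∑' m : ℕ, r ^ m := ENNReal.sum_le_tsum _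
    _ = (1 - r)⁻¹ := ENNReal.tsum_geometric r

lemma aux_inv_sq_partial (J : ℕ) :
    ∑ j ∈ Finset.range J, (1 / ((j : ℝ) + 1)) ^ 2 ≤ 2 - 2 / ((J:ℝ) + 1) := by
  induction J with
  | zero => norm_num
  | succ J ih =>
    rw [Finset.sum_range_succ]
    have h1 : (0:ℝ) < (J:ℝ) + 1 := by positivity
    have h2 : (0:ℝ) < (J:ℝ) + 2 := by positivity
    have key : (1 / ((J : ℝ) + 1)) ^ 2 ≤ 2 / (J + 1) - 2 / (J + 2) := by
      rw [div_sub_div _ _ (ne_of_gt h1) (ne_of_gt h2), div_pow,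
        div_le_div_iff₀ (by positivity) (by positivity)]
      ring_nf
      nlinarith [sq_nonneg ((J:ℝ))]
    have h3 : ((J:ℝ) + 1) + 1 = (J:ℝ) + 2 := by ring
    push_cast
    rw [h3]
    linarith

lemma aux_inv_sq_tsum : ∑' j : ℕ, (ENNReal.ofReal (1 / (2 * ((j : ℝ) + 1)))) ^ 2 ≤ 2⁻¹ := by
  rw [ENNReal.tsum_eq_iSup_nat]
  refine iSup_le fun J => ?_
  have heq : ∑ j ∈ Finset.range J, (ENNReal.ofReal (1 / (2 * ((j : ℝ) + 1)))) ^ 2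
      = ENNReal.ofReal (∑ j ∈ Finset.range J, (1 / (2 * ((j : ℝ) + 1))) ^ 2) := by
    rw [ENNReal.ofReal_sum_of_nonneg (fun j _ => by positivity)]
    exact Finset.sum_congr rfl fun j _ => (ENNReal.ofReal_pow (by positivity) 2).symm
  rw [heq]
  have hsum : ∑ j ∈ Finset.range J, (1 / (2 * ((j : ℝ) + 1))) ^ 2 ≤ 1 / 2 := by
    have h : ∀ j : ℕ, (1 / (2 * ((j : ℝ) + 1))) ^ 2 = (1/4) * (1 / ((j : ℝ) + 1)) ^ 2 := by
      intro j; field_simp; ring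
    rw [Finset.sum_congr rfl fun j _ => h j, ← Finset.mul_sum]
    have h1 := aux_inv_sq_partial J
    have h2 : (2:ℝ) / (J + 1) ≥ 0 := by positivity
    nlinarith
  calc ENNReal.ofReal (∑ j ∈ Finset.range J, (1 / (2 * ((j : ℝ) + 1))) ^ 2)
      ≤ ENNReal.ofReal (1 / 2) := ENNReal.ofReal_le_ofReal hsum
    _ = 2⁻¹ := by rw [one_div, ENNReal.ofReal_inv_of_pos (by norm_num)]; norm_num

lemma aux_ofReal_half_eq : ENNReal.ofReal (1/2 : ℝ) = 2⁻¹ := by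
  rw [one_div, ENNReal.ofReal_inv_of_pos (by norm_num)]
  norm_num

lemma aux_quarter_le_one_sub_exp {x : ℝ} (h0 : 0 ≤ x) (h1 : x ≤ 1) :
    x / 4 ≤ 1 - Real.exp (-x) := by
  have h2 : x + 1 ≤ Real.exp x := Real.add_one_le_exp x
  have h3 : (0:ℝ) < Real.exp (-x) := Real.exp_pos _
  have h4 : x * Real.exp (-x) ≤ 1 - Real.exp (-x) := by
    have h := mul_le_mul_of_nonneg_right h2 h3.le
    rw [← Real.exp_add] at h
    simp only [add_neg_cancel, Real.exp_zero] at h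
    nlinarith
  have h5 : Real.exp (-1) ≤ Real.exp (-x) := Real.exp_le_exp.2 (by linarith)
  have h6 : (1:ℝ)/4 ≤ Real.exp (-1) := by
    rw [Real.exp_neg, div_le_iff₀ (by norm_num), inv_mul_eq_div, le_div_iff₀ (Real.exp_pos 1)]
    nlinarith [Real.exp_one_lt_d9]
  nlinarith

lemma aux_prod_one_sub_le_exp (J : ℕ) (p : ℕ → ℝ) (hp1 : ∀ j, p j ≤ 1) :
    ∏ j ∈ Finset.range J, (1 - p j) ≤ Real.exp (-∑ j ∈ Finset.range J, p j) := by
  rw [← Finset.sum_neg_distrib, Real.exp_sum]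
  apply Finset.prod_le_prod
  · intro j _; linarith [hp1 j]
  · intro j _
    have h := Real.add_one_le_exp (-p j)
    linarith

/-! ### Measurability and integrability -/

section Aux
variable {Ω : Type} [MeasurableSpace Ω] {P : Measure Ω} [IsProbabilityMeasure P]
  {X : ℕ → ℕ → Ω → ℝ} {p : ℕ → ℝ} {n : ℕ}

lemma aux_measurable_empMean (hX : ∀ i j, Measurable (X i j)) (j : ℕ) :
    Measurable (empMean n X j) := by
  unfold empMean
  exact (Finset.measurable_sum _ fun i _ => hX i j).div_const _

lemma aux_measurable_S (hX : ∀ i j, Measurable (X i j)) :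
    Measurable (fun ω => ⨆ j, max (empMean n X j ω - p j) 0) :=
  Measurable.iSup fun j =>
    ((aux_measurable_empMean hX j).sub measurable_const).max measurable_const

lemma aux_term_le_one (hp : ∀ j, 0 ≤ p j) (h01 : ∀ i j ω, X i j ω = 0 ∨ X i j ω = 1)
    (hn : 1 ≤ n) (j : ℕ) (ω : Ω) : max (empMean n X j ω - p j) 0 ≤ 1 := by
  have hsum : ∑ i ∈ Finset.range n, X i j ω ≤ n := by
    calc ∑ i ∈ Finset.range n, X i j ω ≤ ∑ _i ∈ Finset.range n, (1:ℝ) := by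
          apply Finset.sum_le_sum
          intro i _
          rcases h01 i j ω with h | h <;> simp [h]
      _ = n := by simp
  have hm : empMean n X j ω ≤ 1 := by
    rw [empMean, div_le_one (by positivity)]
    exact hsum
  have := hp j
  apply max_le _ zero_le_one
  linarith

lemma aux_bddAbove_terms (hp : ∀ j, 0 ≤ p j) (h01 : ∀ i j ω, X i j ω = 0 ∨ X i j ω = 1)
    (hn : 1 ≤ n) (ω : Ω) : BddAbove (Set.range fun j => max (empMean n X j ω - p j) 0) := by
  refine ⟨1, ?_⟩
  rintro x ⟨j, rfl⟩
  exact aux_term_le_one hp h01 hn j ω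

lemma aux_integrable_S (hX : ∀ i j, Measurable (X i j)) (hp : ∀ j, 0 ≤ p j)
    (h01 : ∀ i j ω, X i j ω = 0 ∨ X i j ω = 1) (hn : 1 ≤ n) :
    Integrable (fun ω => ⨆ j, max (empMean n X j ω - p j) 0) P := by
  refine (integrable_const (1:ℝ)).mono' (aux_measurable_S hX).aestronglyMeasurable ?_
  filter_upwards with ω
  rw [Real.norm_eq_abs, abs_of_nonneg]
  · exact ciSup_le fun j => aux_term_le_one hp h01 hn j ω
  · exact le_ciSup_of_le (aux_bddAbove_terms hp h01 hn ω) 0 (le_max_right _ _)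

/-! ### Independence computations -/

lemma aux_meas_biInter_eq (hind : iIndepFun
      (fun ij : ℕ × ℕ => X ij.1 ij.2) P)
    (c : ℝ) (s : Finset (ℕ × ℕ)) :
    P (⋂ q ∈ s, {ω | X q.1 q.2 ω = c}) = ∏ q ∈ s, P {ω | X q.1 q.2 ω = c} := by
  refine hind.meas_biInter (s := fun q => {ω | X q.1 q.2 ω = c}) ?_
  intro q _
  exact ⟨{c}, measurableSet_singleton c, by ext ω; simp⟩

lemma aux_prob_ones (hind : iIndepFun
      (fun ij : ℕ × ℕ => X ij.1 ij.2) P)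
    (hP1 : ∀ i j, P {ω | X i j ω = 1} = ENNReal.ofReal (p j))
    (j : ℕ) (A : Finset ℕ) :
    P (⋂ i ∈ A, {ω | X i j ω = 1}) = ENNReal.ofReal (p j) ^ A.card := by
  let emb : ℕ ↪ ℕ × ℕ := ⟨fun i => (i, j), Prod.mk_left_injective j⟩
  have hset : (⋂ i ∈ A, {ω | X i j ω = 1}) = ⋂ q ∈ A.map emb, {ω | X q.1 q.2 ω = 1} := by
    ext ω
    simp [emb]
  rw [hset, aux_meas_biInter_eq hind, Finset.prod_map]
  simp only [emb, Function.Embedding.coeFn_mk, hP1]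
  rw [Finset.prod_const]

lemma aux_prob_zero (h01 : ∀ i j ω, X i j ω = 0 ∨ X i j ω = 1)
    (hX : ∀ i j, Measurable (X i j))
    (hP1 : ∀ i j, P {ω | X i j ω = 1} = ENNReal.ofReal (p j))
    (i j : ℕ) : P {ω | X i j ω = 0} = 1 - ENNReal.ofReal (p j) := by
  have hc : {ω | X i j ω = 0} = {ω | X i j ω = 1}ᶜ := by
    ext ω
    rcases h01 i j ω with h | h <;> simp [h]
  have hm : MeasurableSet {ω | X i j ω = 1} := hX i j (measurableSet_singleton 1)
  rw [hc, measure_compl hm (measure_ne_top _ _), measure_univ, hP1]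

lemma aux_prob_zeros (hind : iIndepFun
      (fun ij : ℕ × ℕ => X ij.1 ij.2) P)
    (h01 : ∀ i j ω, X i j ω = 0 ∨ X i j ω = 1)
    (hX : ∀ i j, Measurable (X i j))
    (hP1 : ∀ i j, P {ω | X i j ω = 1} = ENNReal.ofReal (p j))
    (J : ℕ) :
    P (⋂ q ∈ Finset.range n ×ˢ Finset.range J, {ω | X q.1 q.2 ω = 0})
      = (∏ j ∈ Finset.range J, (1 - ENNReal.ofReal (p j))) ^ n := by
  rw [aux_meas_biInter_eq hind, Finset.prod_product]
  simp only [aux_prob_zero h01 hX hP1]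
  rw [Finset.prod_const, Finset.card_range]

/-! ### Binomial tail bound -/

lemma aux_sum_eq_card (h01 : ∀ i j ω, X i j ω = 0 ∨ X i j ω = 1) (j : ℕ) (ω : Ω) :
    ∑ i ∈ Finset.range n, X i j ω
      = ((Finset.range n).filter (fun i => X i j ω = 1)).card := by
  classical
  rw [← Finset.sum_boole]
  exact Finset.sum_congr rfl fun i _ => by rcases h01 i j ω with h | h <;> simp [h]

lemma aux_binom_tail (hind : iIndepFun
      (fun ij : ℕ × ℕ => X ij.1 ij.2) P)
    (h01 : ∀ i j ω, X i j ω = 0 ∨ X i j ω = 1)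
    (hP1 : ∀ i j, P {ω | X i j ω = 1} = ENNReal.ofReal (p j))
    (j k : ℕ) :
    P {ω | (k : ℝ) ≤ ∑ i ∈ Finset.range n, X i j ω}
      ≤ (n : ℝ≥0∞) ^ k * ENNReal.ofReal (p j) ^ k := by
  classical
  have hsub : {ω | (k : ℝ) ≤ ∑ i ∈ Finset.range n, X i j ω}
      ⊆ ⋃ A ∈ Finset.powersetCard k (Finset.range n), ⋂ i ∈ A, {ω | X i j ω = 1} := by
    intro ω hω
    have hc : (k : ℝ) ≤ ((Finset.range n).filter (fun i => X i j ω = 1)).card := by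
      rw [← aux_sum_eq_card h01 j ω]; exact hω
    have hk : k ≤ ((Finset.range n).filter (fun i => X i j ω = 1)).card := by
      exact_mod_cast hc
    obtain ⟨A, hAsub, hAcard⟩ := Finset.exists_subset_card_eq hk
    have hAmem : A ∈ Finset.powersetCard k (Finset.range n) :=
      Finset.mem_powersetCard.2 ⟨hAsub.trans (Finset.filter_subset _ _), hAcard⟩
    refine Set.mem_biUnion hAmem ?_
    refine Set.mem_iInter₂.2 fun i hi => ?_
    have h := hAsub hi
    rw [Finset.mem_filter] at h
    exact h.2
  calc P {ω | (k : ℝ) ≤ ∑ i ∈ Finset.range n, X i j ω}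
      ≤ P (⋃ A ∈ Finset.powersetCard k (Finset.range n), ⋂ i ∈ A, {ω | X i j ω = 1}) :=
        measure_mono hsub
    _ ≤ ∑ A ∈ Finset.powersetCard k (Finset.range n), P (⋂ i ∈ A, {ω | X i j ω = 1}) :=
        measure_biUnion_finset_le _ _
    _ = ∑ A ∈ Finset.powersetCard k (Finset.range n), ENNReal.ofReal (p j) ^ k := by
        apply Finset.sum_congr rfl
        intro A hA
        rw [aux_prob_ones hind hP1 j A, (Finset.mem_powersetCard.1 hA).2]
    _ = (n.choose k : ℝ≥0∞) * ENNReal.ofReal (p j) ^ k := by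
        rw [Finset.sum_const, Finset.card_powersetCard, Finset.card_range, nsmul_eq_mul]
    _ ≤ (n : ℝ≥0∞) ^ k * ENNReal.ofReal (p j) ^ k := by
        gcongr
        exact_mod_cast Nat.choose_le_pow n k

/-! ### Pointwise and integral upper bound -/

lemma aux_pointwise_ub (hn : 1 ≤ n) (hp : ∀ j, 0 ≤ p j)
    (h01 : ∀ i j ω, X i j ω = 0 ∨ X i j ω = 1) (ω : Ω) :
    (⨆ j, max (empMean n X j ω - p j) 0)
      ≤ (∑ k ∈ Finset.Icc 1 n,
          Set.indicator (⋃ j, {ω' | (k : ℝ) ≤ ∑ i ∈ Finset.range n, X i j ω'})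
            (fun _ => (1:ℝ)) ω) / n := by
  classical
  have hnpos : (0:ℝ) < n := by exact_mod_cast hn
  refine ciSup_le fun j => ?_
  set m := ((Finset.range n).filter (fun i => X i j ω = 1)).card with hm
  have hsum : ∑ i ∈ Finset.range n, X i j ω = m := aux_sum_eq_card h01 j ω
  have hmn : m ≤ n := le_trans (Finset.card_filter_le _ _) (by simp)
  have hind : (m : ℝ) ≤ ∑ k ∈ Finset.Icc 1 n,
      Set.indicator (⋃ j, {ω' | (k : ℝ) ≤ ∑ i ∈ Finset.range n, X i j ω'})
        (fun _ => (1:ℝ)) ω := by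
    have hsubset : Finset.Icc 1 m ⊆ Finset.Icc 1 n := Finset.Icc_subset_Icc_right hmn
    have hstep : ∀ k ∈ Finset.Icc 1 m,
        Set.indicator (⋃ j, {ω' | (k : ℝ) ≤ ∑ i ∈ Finset.range n, X i j ω'})
          (fun _ => (1:ℝ)) ω = 1 := by
      intro k hk
      rw [Finset.mem_Icc] at hk
      apply Set.indicator_of_mem
      exact Set.mem_iUnion.2 ⟨j, by simp only [Set.mem_setOf_eq, hsum]; exact_mod_cast hk.2⟩
    calc (m : ℝ) = ∑ k ∈ Finset.Icc 1 m, (1:ℝ) := by simp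
      _ = ∑ k ∈ Finset.Icc 1 m,
          Set.indicator (⋃ j, {ω' | (k : ℝ) ≤ ∑ i ∈ Finset.range n, X i j ω'})
            (fun _ => (1:ℝ)) ω := (Finset.sum_congr rfl hstep).symm
      _ ≤ _ := Finset.sum_le_sum_of_subset_of_nonneg hsubset
          (fun k _ _ => Set.indicator_nonneg (fun _ _ => zero_le_one) ω)
  apply max_le
  · calc empMean n X j ω - p j ≤ empMean n X j ω := by linarith [hp j]
      _ ≤ _ := by
        rw [empMean, hsum]
        gcongr
  · exact div_nonneg (Finset.sum_nonneg fun k _ =>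
      Set.indicator_nonneg (fun _ _ => zero_le_one) ω) hnpos.le

lemma aux_integral_ub (hn : 1 ≤ n) (hp : ∀ j, 0 ≤ p j)
    (hX : ∀ i j, Measurable (X i j))
    (h01 : ∀ i j ω, X i j ω = 0 ∨ X i j ω = 1)
    (hint : Integrable (fun ω => ⨆ j, max (empMean n X j ω - p j) 0) P) :
    ∫ ω, (⨆ j, max (empMean n X j ω - p j) 0) ∂P
      ≤ (∑ k ∈ Finset.Icc 1 n,
          (P (⋃ j, {ω' | (k : ℝ) ≤ ∑ i ∈ Finset.range n, X i j ω'})).toReal) / n := by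
  have hBmeas : ∀ k : ℕ,
      MeasurableSet (⋃ j, {ω' | (k : ℝ) ≤ ∑ i ∈ Finset.range n, X i j ω'}) := by
    intro k
    exact MeasurableSet.iUnion fun j =>
      measurableSet_le measurable_const (Finset.measurable_sum _ fun i _ => hX i j)
  have hintg : ∀ k : ℕ, Integrable
      (Set.indicator (⋃ j, {ω' | (k : ℝ) ≤ ∑ i ∈ Finset.range n, X i j ω'})
        (fun _ => (1:ℝ))) P :=
    fun k => (integrable_const 1).indicator (hBmeas k)
  have h2 : ∫ ω, (∑ k ∈ Finset.Icc 1 n,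
      Set.indicator (⋃ j, {ω' | (k : ℝ) ≤ ∑ i ∈ Finset.range n, X i j ω'})
        (fun _ => (1:ℝ)) ω) / n ∂P
      = (∑ k ∈ Finset.Icc 1 n,
          (P (⋃ j, {ω' | (k : ℝ) ≤ ∑ i ∈ Finset.range n, X i j ω'})).toReal) / n := by
    rw [integral_div, integral_finset_sum _ fun k _ => hintg k]
    congr 1
    refine Finset.sum_congr rfl fun k _ => ?_
    rw [integral_indicator_const (1:ℝ) (hBmeas k), smul_eq_mul, mul_one, measureReal_def]
  rw [← h2]
  refine integral_mono hint ?_ fun ω => aux_pointwise_ub hn hp h01 ω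
  exact (Integrable.div_const (integrable_finset_sum _ fun k _ => hintg k) _)

/-! ### Upper bound arithmetic -/

lemma aux_upper_arith (hn : 1 ≤ n)
    (hp0 : ∀ j, 0 ≤ p j)
    (hp2 : ∀ j : ℕ, p j ≤ 1 / (2 * n * (j + 1)))
    (hB : ∀ k : ℕ, 1 ≤ k → P (⋃ j, {ω' | (k : ℝ) ≤ ∑ i ∈ Finset.range n, X i j ω'})
      ≤ ∑' j, ((n : ℝ≥0∞) * ENNReal.ofReal (p j)) ^ k) :
    (∑ k ∈ Finset.Icc 1 n,
        (P (⋃ j, {ω' | (k : ℝ) ≤ ∑ i ∈ Finset.range n, X i j ω'})).toReal) / n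
      ≤ 2 * ((1 / (n : ℝ≥0∞)) ⊓ ∑' j, ENNReal.ofReal (p j)).toReal := by
  classical
  have hn0 : n ≠ 0 := by omega
  have hnR : (0:ℝ) < n := by exact_mod_cast hn
  set q : ℕ → ℝ≥0∞ := fun j => ENNReal.ofReal (p j) with hqdef
  set Sig : ℝ≥0∞ := ∑' j, q j with hSig
  set m : ℝ≥0∞ := (1 / (n : ℝ≥0∞)) ⊓ Sig with hm
  set B : ℕ → Set Ω := fun k => ⋃ j, {ω' | (k : ℝ) ≤ ∑ i ∈ Finset.range n, X i j ω'} with hBdef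
  have hmtop : m ≠ ⊤ := by
    refine ne_top_of_le_ne_top ?_ inf_le_left
    simp [ENNReal.div_eq_top, hn0]
  have hq : ∀ j : ℕ, (n:ℝ≥0∞) * q j ≤ ENNReal.ofReal (1 / (2 * ((j:ℝ) + 1))) := by
    intro j
    show (n:ℝ≥0∞) * ENNReal.ofReal (p j) ≤ _
    rw [← ENNReal.ofReal_natCast n, ← ENNReal.ofReal_mul (Nat.cast_nonneg n)]
    apply ENNReal.ofReal_le_ofReal
    have h1 : (n:ℝ) * p j ≤ (n:ℝ) * (1/(2*(n:ℝ)*((j:ℝ)+1))) :=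
      mul_le_mul_of_nonneg_left (hp2 j) (Nat.cast_nonneg n)
    have h2 : (n:ℝ) * (1/(2*(n:ℝ)*((j:ℝ)+1))) = 1/(2*((j:ℝ)+1)) := by
      have hj : (0:ℝ) < (j:ℝ)+1 := by positivity
      have hne : (n:ℝ) ≠ 0 := ne_of_gt hnR
      field_simp
    linarith
  have hqhalf : ∀ j : ℕ, (n:ℝ≥0∞) * q j ≤ 2⁻¹ := by
    intro j
    refine le_trans (hq j) (le_trans (ENNReal.ofReal_le_ofReal ?_) aux_ofReal_half_eq.le)
    have hj : (0:ℝ) ≤ (j:ℝ) := Nat.cast_nonneg _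
    rw [div_le_div_iff₀ (by positivity) (by norm_num)]
    nlinarith
  have hconv : (∑ k ∈ Finset.Icc 1 n, P (B k) ≤ 2 * (n:ℝ≥0∞) * m) →
      (∑ k ∈ Finset.Icc 1 n, (P (B k)).toReal) / n ≤ 2 * m.toReal := by
    intro h
    have h1 : ∑ k ∈ Finset.Icc 1 n, (P (B k)).toReal
        = (∑ k ∈ Finset.Icc 1 n, P (B k)).toReal :=
      (ENNReal.toReal_sum fun k _ => measure_ne_top _ _).symm
    have h2 := ENNReal.toReal_mono (by finiteness) h
    rw [ENNReal.toReal_mul, ENNReal.toReal_mul, ENNReal.toReal_ofNat, ENNReal.toReal_natCast] at h2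
    rw [h1, div_le_iff₀ hnR]
    calc (∑ k ∈ Finset.Icc 1 n, P (B k)).toReal ≤ 2 * n * m.toReal := h2
      _ = 2 * m.toReal * n := by ring
  rcases le_or_gt Sig (1 / (n : ℝ≥0∞)) with hcase | hcase
  · have hmeq : m = Sig := inf_eq_right.mpr hcase
    have hT : ∑ k ∈ Finset.Icc 1 n, P (B k) ≤ 2 * ((n:ℝ≥0∞) * Sig) := by
      calc ∑ k ∈ Finset.Icc 1 n, P (B k)
          ≤ ∑ k ∈ Finset.Icc 1 n, (2⁻¹:ℝ≥0∞)^(k-1) * ((n:ℝ≥0∞) * Sig) := by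
            apply Finset.sum_le_sum
            intro k hk
            rw [Finset.mem_Icc] at hk
            refine le_trans (hB k hk.1) ?_
            calc ∑' j, ((n : ℝ≥0∞) * q j) ^ k
                ≤ ∑' j, (2⁻¹:ℝ≥0∞)^(k-1) * ((n : ℝ≥0∞) * q j) := by
                  apply ENNReal.tsum_le_tsum
                  intro j
                  have hk1 : k = (k-1)+1 := by omega
                  conv_lhs => rw [hk1, pow_succ]
                  exact mul_le_mul' (pow_le_pow_left' (hqhalf j) _) le_rfl
              _ = (2⁻¹:ℝ≥0∞)^(k-1) * ((n:ℝ≥0∞) * Sig) := by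
                  rw [ENNReal.tsum_mul_left, ENNReal.tsum_mul_left]
        _ = (∑ k ∈ Finset.Icc 1 n, (2⁻¹:ℝ≥0∞)^(k-1)) * ((n:ℝ≥0∞) * Sig) := by
            rw [Finset.sum_mul]
        _ ≤ 2 * ((n:ℝ≥0∞) * Sig) := by
            apply mul_le_mul' _ le_rfl
            refine le_trans (aux_sum_Icc_pow_le 1 n 2⁻¹) ?_
            rw [ENNReal.one_sub_inv_two, inv_inv]
    have hgoal : ∑ k ∈ Finset.Icc 1 n, P (B k) ≤ 2 * (n:ℝ≥0∞) * m := by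
      rw [hmeq, mul_assoc]
      exact hT
    exact hconv hgoal
  · have hmeq : m = 1 / (n : ℝ≥0∞) := inf_eq_left.mpr hcase.le
    have hsplit : Finset.Icc 1 n = insert 1 (Finset.Icc 2 n) := by
      ext k
      simp only [Finset.mem_Icc, Finset.mem_insert]
      omega
    have hT : ∑ k ∈ Finset.Icc 1 n, P (B k) ≤ 2 := by
      rw [hsplit, Finset.sum_insert (by simp)]
      have h1 : P (B 1) ≤ 1 := prob_le_one
      have h2 : ∑ k ∈ Finset.Icc 2 n, P (B k) ≤ 1 := by
        calc ∑ k ∈ Finset.Icc 2 n, P (B k)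
            ≤ ∑ k ∈ Finset.Icc 2 n, (2⁻¹:ℝ≥0∞) * (2⁻¹:ℝ≥0∞)^(k-2) := by
              apply Finset.sum_le_sum
              intro k hk
              rw [Finset.mem_Icc] at hk
              refine le_trans (hB k (by omega)) ?_
              calc ∑' j, ((n : ℝ≥0∞) * q j) ^ k
                  ≤ ∑' j : ℕ, (ENNReal.ofReal (1 / (2 * ((j:ℝ) + 1))))^2
                      * (2⁻¹:ℝ≥0∞)^(k-2) := by
                    apply ENNReal.tsum_le_tsum
                    intro j
                    have hk2 : k = 2 + (k-2) := by omega
                    conv_lhs => rw [hk2, pow_add]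
                    exact mul_le_mul' (pow_le_pow_left' (hq j) 2)
                      (pow_le_pow_left' (hqhalf j) _)
                _ = (∑' j : ℕ, (ENNReal.ofReal (1 / (2 * ((j:ℝ) + 1))))^2)
                      * (2⁻¹:ℝ≥0∞)^(k-2) := by
                    rw [ENNReal.tsum_mul_right]
                _ ≤ (2⁻¹:ℝ≥0∞) * (2⁻¹:ℝ≥0∞)^(k-2) := mul_le_mul' aux_inv_sq_tsum le_rfl
          _ = (2⁻¹:ℝ≥0∞) * ∑ k ∈ Finset.Icc 2 n, (2⁻¹:ℝ≥0∞)^(k-2) := by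
              rw [Finset.mul_sum]
          _ ≤ (2⁻¹:ℝ≥0∞) * 2 := by
              apply mul_le_mul' le_rfl
              refine le_trans (aux_sum_Icc_pow_le 2 n 2⁻¹) ?_
              rw [ENNReal.one_sub_inv_two, inv_inv]
          _ = 1 := ENNReal.inv_mul_cancel (by norm_num) (by norm_num)
      calc P (B 1) + ∑ k ∈ Finset.Icc 2 n, P (B k) ≤ 1 + 1 := add_le_add h1 h2
        _ = 2 := one_add_one_eq_two
    have hgoal : ∑ k ∈ Finset.Icc 1 n, P (B k) ≤ 2 * (n:ℝ≥0∞) * m := by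
      rw [hmeq]
      have h3 : 2 * (n:ℝ≥0∞) * (1/(n:ℝ≥0∞)) = 2 := by
        rw [mul_assoc, mul_one_div, ENNReal.div_self (by exact_mod_cast hn0) (by simp),
          mul_one]
      rw [h3]
      exact hT
    exact hconv hgoal

lemma aux_lower_bound (hn : 1 ≤ n)
    (hX : ∀ i j, Measurable (X i j))
    (h01 : ∀ i j ω, X i j ω = 0 ∨ X i j ω = 1)
    (hp0 : ∀ j, 0 ≤ p j) (hp1 : ∀ j, p j ≤ 1)
    (hp2 : ∀ j : ℕ, p j ≤ 1 / (2 * n * (j + 1)))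
    (hind : iIndepFun
      (fun ij : ℕ × ℕ => X ij.1 ij.2) P)
    (hP1 : ∀ i j, P {ω | X i j ω = 1} = ENNReal.ofReal (p j)) :
    (1/16 : ℝ) * ((1 / (n : ℝ≥0∞)) ⊓ ∑' j, ENNReal.ofReal (p j)).toReal
      ≤ ∫ ω, (⨆ j, max (empMean n X j ω - p j) 0) ∂P := by
  classical
  have hnR : (0:ℝ) < n := by exact_mod_cast hn
  have hSnonneg : ∀ ω : Ω, 0 ≤ ⨆ j, max (empMean n X j ω - p j) 0 := fun ω =>
    le_ciSup_of_le (aux_bddAbove_terms hp0 h01 hn ω) 0 (le_max_right _ _)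
  set m : ℝ≥0∞ := (1 / (n : ℝ≥0∞)) ⊓ ∑' j, ENNReal.ofReal (p j) with hm
  have hn0 : n ≠ 0 := by omega
  have hmtop : m ≠ ⊤ := by
    refine ne_top_of_le_ne_top ?_ inf_le_left
    simp [ENNReal.div_eq_top, hn0]
  by_cases hm0 : m = 0
  · rw [hm0]
    simp only [ENNReal.toReal_zero, mul_zero]
    exact integral_nonneg hSnonneg
  -- m > 0 case
  have hm2 : m / 2 < ∑' j, ENNReal.ofReal (p j) :=
    lt_of_lt_of_le (ENNReal.half_lt_self hm0 hmtop) inf_le_right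
  rw [ENNReal.tsum_eq_iSup_nat] at hm2
  rw [lt_iSup_iff] at hm2
  have hex : ∃ J, m / 2 < ∑ j ∈ Finset.range J, ENNReal.ofReal (p j) := hm2
  set J := Nat.find hex with hJdef
  have hJ : m / 2 < ∑ j ∈ Finset.range J, ENNReal.ofReal (p j) := Nat.find_spec hex
  have hJpos : 1 ≤ J := by
    rcases Nat.eq_zero_or_pos J with h | h
    · exfalso
      rw [h] at hJ
      simp at hJ
    · exact h
  have hJmin : ∑ j ∈ Finset.range (J - 1), ENNReal.ofReal (p j) ≤ m / 2 := by
    by_contra hcon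
    push_neg at hcon
    exact Nat.find_min hex (by omega) hcon
  set s : ℝ := ∑ j ∈ Finset.range J, p j with hs
  have hsofReal : ENNReal.ofReal s = ∑ j ∈ Finset.range J, ENNReal.ofReal (p j) :=
    ENNReal.ofReal_sum_of_nonneg fun j _ => hp0 j
  have hs0 : 0 ≤ s := Finset.sum_nonneg fun j _ => hp0 j
  -- m.toReal / 2 ≤ s
  have hmsplit : m.toReal / 2 < s := by
    have := ENNReal.toReal_lt_toReal (by finiteness) (by finiteness) |>.mpr
      (hsofReal ▸ hJ)
    rwa [ENNReal.toReal_div, ENNReal.toReal_ofNat, ENNReal.toReal_ofReal hs0] at this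
  -- s ≤ 1/n
  have hmn : m.toReal ≤ 1 / n := by
    have h1 : m ≤ 1 / (n : ℝ≥0∞) := inf_le_left
    have h2 := ENNReal.toReal_mono (by simp [ENNReal.div_eq_top, hn0]) h1
    rwa [ENNReal.toReal_div, ENNReal.toReal_one, ENNReal.toReal_natCast] at h2
  have hsn : s ≤ 1 / n := by
    have hsm : s = (∑ j ∈ Finset.range (J-1), p j) + p (J-1) := by
      have hJ1 : J = (J-1)+1 := by omega
      rw [hs]
      conv_lhs => rw [hJ1]
      rw [Finset.sum_range_succ]
    have hpart : (∑ j ∈ Finset.range (J-1), p j) ≤ m.toReal / 2 := by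
      have h1 : ENNReal.ofReal (∑ j ∈ Finset.range (J-1), p j)
          = ∑ j ∈ Finset.range (J-1), ENNReal.ofReal (p j) :=
        ENNReal.ofReal_sum_of_nonneg fun j _ => hp0 j
      have h2 := ENNReal.toReal_mono (by finiteness) (h1 ▸ hJmin)
      rwa [ENNReal.toReal_ofReal (Finset.sum_nonneg fun j _ => hp0 j),
        ENNReal.toReal_div, ENNReal.toReal_ofNat] at h2
    have hpJ : p (J-1) ≤ 1 / (2 * n) := by
      refine le_trans (hp2 (J-1)) ?_
      have hc : (0:ℝ) ≤ ((J - 1 : ℕ) : ℝ) := Nat.cast_nonneg _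
      rw [div_le_div_iff₀ (by positivity) (by positivity)]
      nlinarith
    have hhalf : m.toReal / 2 ≤ 1/(2*n) := by
      rw [show (1:ℝ)/(2*(n:ℝ)) = (1/n)/2 by ring]
      linarith
    have hfin : (1:ℝ)/(2*n) + 1/(2*n) = 1/n := by
      have hne : (n:ℝ) ≠ 0 := ne_of_gt hnR
      field_simp
      norm_num
    calc s = (∑ j ∈ Finset.range (J-1), p j) + p (J-1) := hsm
      _ ≤ m.toReal / 2 + 1 / (2*n) := by linarith
      _ ≤ 1/(2*n) + 1/(2*n) := by linarith
      _ = 1 / n := hfin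
  -- the event G: some X i j = 1 for i < n, j < J
  set G : Set Ω := (⋂ q ∈ Finset.range n ×ˢ Finset.range J, {ω | X q.1 q.2 ω = 0})ᶜ with hG
  have hGmeas : MeasurableSet G := by
    apply MeasurableSet.compl
    exact Finset.measurableSet_biInter _ fun q _ => hX q.1 q.2 (measurableSet_singleton 0)
  set r : ℝ := ∏ j ∈ Finset.range J, (1 - p j) with hr
  have hr0 : 0 ≤ r := Finset.prod_nonneg fun j _ => by linarith [hp1 j]
  have hr1 : r ≤ 1 := Finset.prod_le_one (fun j _ => by linarith [hp1 j])
    (fun j _ => by linarith [hp0 j])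
  have hfact : ∀ j : ℕ, (1 : ℝ≥0∞) - ENNReal.ofReal (p j) = ENNReal.ofReal (1 - p j) :=
    fun j => by rw [ENNReal.ofReal_sub _ (hp0 j), ENNReal.ofReal_one]
  have hprod : ∏ j ∈ Finset.range J, (1 - ENNReal.ofReal (p j)) = ENNReal.ofReal r := by
    rw [Finset.prod_congr rfl fun j _ => hfact j, hr,
      ENNReal.ofReal_prod_of_nonneg fun j _ => by linarith [hp1 j]]
  have hPG : P G = 1 - ENNReal.ofReal (r ^ n) := by
    rw [hG, measure_compl (hGmeas.of_compl.compl.of_compl) (measure_ne_top _ _), measure_univ,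
      aux_prob_zeros hind h01 hX hP1 J, hprod, ENNReal.ofReal_pow hr0]
  have hrn1 : 0 ≤ 1 - r ^ n := by
    have := pow_le_one₀ hr0 hr1 (n := n)
    linarith
  have hPGr : (P G).toReal = 1 - r ^ n := by
    rw [hPG, ← ENNReal.ofReal_one, ← ENNReal.ofReal_sub _ (by positivity),
      ENNReal.toReal_ofReal hrn1]
  -- pointwise bound on G
  have hpoint : ∀ ω ∈ G, 1/(2*(n:ℝ)) ≤ ⨆ j, max (empMean n X j ω - p j) 0 := by
    intro ω hω
    rw [hG, Set.mem_compl_iff] at hω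
    have hwit : ∃ q ∈ Finset.range n ×ˢ Finset.range J, X q.1 q.2 ω ≠ 0 := by
      by_contra hc
      push_neg at hc
      exact hω (Set.mem_iInter₂.2 fun q hq => hc q hq)
    obtain ⟨⟨i, j⟩, hqmem, hne⟩ := hwit
    have hij : i ∈ Finset.range n := (Finset.mem_product.1 hqmem).1
    have hone : X i j ω = 1 := (h01 i j ω).resolve_left hne
    have hsumge : (1:ℝ) ≤ ∑ i' ∈ Finset.range n, X i' j ω := by
      rw [← hone]
      exact Finset.single_le_sum (f := fun i' => X i' j ω)
        (fun i' _ => by rcases h01 i' j ω with h|h <;> simp [h]) hij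
    have hmean : 1/(n:ℝ) ≤ empMean n X j ω := by
      rw [empMean]
      rw [div_le_div_iff₀ hnR hnR]
      nlinarith
    have hpj : p j ≤ 1/(2*(n:ℝ)) := by
      refine le_trans (hp2 j) ?_
      have hc : (0:ℝ) ≤ (j : ℝ) := Nat.cast_nonneg _
      rw [div_le_div_iff₀ (by positivity) (by positivity)]
      nlinarith
    have hhalfid : 1/(2*(n:ℝ)) = 1/(n:ℝ) - 1/(2*(n:ℝ)) := by
      have hne2 : (n:ℝ) ≠ 0 := ne_of_gt hnR
      field_simp
      ring
    refine le_ciSup_of_le (aux_bddAbove_terms hp0 h01 hn ω) j (le_trans ?_ (le_max_left _ _))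
    linarith
  -- integral bound
  have hGind : ∀ ω, Set.indicator G (fun _ => 1/(2*(n:ℝ))) ω
      ≤ ⨆ j, max (empMean n X j ω - p j) 0 := by
    intro ω
    by_cases hω : ω ∈ G
    · rw [Set.indicator_of_mem hω]
      exact hpoint ω hω
    · rw [Set.indicator_of_notMem hω]
      exact hSnonneg ω
  have hint := integral_mono
    ((integrable_const (μ := P) (1/(2*(n:ℝ)))).indicator hGmeas)
    (aux_integrable_S hX hp0 h01 hn) hGind
  rw [integral_indicator_const _ hGmeas, smul_eq_mul] at hint
  -- analytic chain
  have hrn : r^n ≤ Real.exp (-((n:ℝ)*s)) := by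
    calc r^n ≤ (Real.exp (-s))^n :=
          pow_le_pow_left₀ hr0 (aux_prod_one_sub_le_exp J p hp1) n
      _ = Real.exp (-((n:ℝ)*s)) := by
          rw [← Real.exp_nat_mul]
          ring_nf
  have hns1 : (n:ℝ)*s ≤ 1 := by
    have h2 : (n:ℝ) * (1/(n:ℝ)) = 1 := by field_simp
    nlinarith
  have hq := aux_quarter_le_one_sub_exp (x := (n:ℝ)*s) (by positivity) hns1
  have hfinal : ((n:ℝ)*s)/4 ≤ (P G).toReal := by
    rw [hPGr]
    linarith
  have hid : (((n:ℝ)*s)/4) * (1/(2*(n:ℝ))) = s/8 := by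
    have hne2 : (n:ℝ) ≠ 0 := ne_of_gt hnR
    field_simp
    ring
  calc (1/16:ℝ) * m.toReal ≤ s/8 := by linarith
    _ = (((n:ℝ)*s)/4) * (1/(2*(n:ℝ))) := hid.symm
    _ ≤ (P G).toReal * (1/(2*(n:ℝ))) :=
        mul_le_mul_of_nonneg_right hfinal (by positivity)
    _ ≤ _ := hint


end Aux

/-! ### Main theorem -/

theorem stmt15 :
    ∃ c C : ℝ, 0 < c ∧ 0 < C ∧
      ∀ (n : ℕ), 1 ≤ n →
      ∀ p : ℕ → ℝ, IsProbSeq p →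
        -- if p(j) ≤ 1/(2nj) for all j ≥ 1
        (∀ j : ℕ, p j ≤ 1 / (2 * n * (j + 1))) →
        ∀ (Ω : Type) [MeasurableSpace Ω] (P : Measure Ω) [IsProbabilityMeasure P]
          (X : ℕ → ℕ → Ω → ℝ), IsBernoulliProduct P X p →
          -- c·min(1/n, ∑ p(j)) ≤ Δ_n^+(p) ≤ C·min(1/n, ∑ p(j)), the min being
          -- computed in ℝ≥0∞ so that a divergent sum is handled correctly
          c * ((1 / (n : ℝ≥0∞)) ⊓ ∑' j, ENNReal.ofReal (p j)).toReal ≤ maxDevPlus n P X p ∧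
          maxDevPlus n P X p ≤ C * ((1 / (n : ℝ≥0∞)) ⊓ ∑' j, ENNReal.ofReal (p j)).toReal := by
  refine ⟨1/16, 2, by norm_num, by norm_num, ?_⟩
  intro n hn p hp hp2 Ω _ P _ X hXprod
  obtain ⟨hmeas, h01, hP1, hind⟩ := hXprod
  obtain ⟨hpIcc, hanti, htend⟩ := hp
  have hp0 : ∀ j, 0 ≤ p j := fun j => (hpIcc j).1
  have hp1 : ∀ j, p j ≤ 1 := fun j => le_trans (hpIcc j).2 (by norm_num)
  constructor
  · exact aux_lower_bound hn hmeas h01 hp0 hp1 hp2 hind hP1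
  · have hBk : ∀ k : ℕ, 1 ≤ k →
        P (⋃ j, {ω' | (k : ℝ) ≤ ∑ i ∈ Finset.range n, X i j ω'})
          ≤ ∑' j, ((n : ℝ≥0∞) * ENNReal.ofReal (p j)) ^ k := by
      intro k hk
      refine le_trans (measure_iUnion_le _) (ENNReal.tsum_le_tsum fun j => ?_)
      rw [mul_pow]
      exact aux_binom_tail hind h01 hP1 j k
    calc maxDevPlus n P X p
        ≤ (∑ k ∈ Finset.Icc 1 n,
            (P (⋃ j, {ω' | (k : ℝ) ≤ ∑ i ∈ Finset.range n, X i j ω'})).toReal) / n :=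
          aux_integral_ub hn hp0 hmeas h01 (aux_integrable_S hmeas hp0 h01 hn)
      _ ≤ 2 * ((1 / (n : ℝ≥0∞)) ⊓ ∑' j, ENNReal.ofReal (p j)).toReal :=
          aux_upper_arith hn hp0 hp2 hBk
end

section
/- Let 0 < q ≤ 1/4 and 0 ≤ ε ≤ 1/4 with ε ≥ 8q. Then (ε/2)·ln(ε/q) ≤ q·h(ε/q) ≤ D(q+ε ‖ q) ≤ 2ε·ln(ε/q). Moreover, for any 0 < q ≤ 1 and 0 ≤ ε ≤ 1 with q + ε ≤ 1/2, one has ε²/(2(q+ε)) ≤ q·h(ε/q) ≤ D(q+ε ‖ q) ≤ ε²/q. -/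
/-- The Kullback–Leibler divergence `D(a ‖ b)` between Bernoulli distributions with
parameters `a` and `b`. -/
noncomputable def klBern (a b : ℝ) : ℝ :=
  a * Real.log (a / b) + (1 - a) * Real.log ((1 - a) / (1 - b))

/-- `h(u) = (1+u)·ln(1+u) - u`. -/
noncomputable def hFun (u : ℝ) : ℝ := (1 + u) * Real.log (1 + u) - u

private lemma mono_aux {f f' : ℝ → ℝ} {a b : ℝ} (hab : a ≤ b)
    (hf : ∀ x ∈ Set.Icc a b, HasDerivAt f (f' x) x)
    (hf' : ∀ x ∈ Set.Icc a b, 0 ≤ f' x) : f a ≤ f b := by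
  have hmono : MonotoneOn f (Set.Icc a b) := by
    apply monotoneOn_of_deriv_nonneg (convex_Icc a b)
    · exact fun x hx => (hf x hx).continuousAt.continuousWithinAt
    · intro x hx
      rw [interior_Icc] at hx
      exact (hf x (Set.mem_Icc_of_Ioo hx)).differentiableAt.differentiableWithinAt
    · intro x hx
      rw [interior_Icc] at hx
      rw [(hf x (Set.mem_Icc_of_Ioo hx)).deriv]
      exact hf' x (Set.mem_Icc_of_Ioo hx)
  exact hmono (Set.left_mem_Icc.2 hab) (Set.right_mem_Icc.2 hab) hab

/-- Key: `u + u²/2 ≤ -log(1-u)` for `0 ≤ u < 1`. -/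
private lemma key_log {u : ℝ} (h0 : 0 ≤ u) (h1 : u < 1) :
    u + u ^ 2 / 2 ≤ -Real.log (1 - u) := by
  have h := mono_aux (f := fun t => -Real.log (1 - t) - t - t ^ 2 / 2)
      (f' := fun t => t ^ 2 / (1 - t)) (a := 0) (b := u) h0 ?_ ?_
  · simp only [Real.log_one, sub_zero, neg_zero] at h
    norm_num at h
    linarith
  · intro x hx
    have hx1 : 1 - x > 0 := by
      rcases hx with ⟨hxa, hxb⟩; linarith
    have hd1 : HasDerivAt (fun t : ℝ => 1 - t) (-1) x := by
      simpa using (hasDerivAt_id x).const_sub 1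
    have hlog : HasDerivAt (fun t : ℝ => Real.log (1 - t)) ((1 - x)⁻¹ * (-1)) x :=
      (Real.hasDerivAt_log hx1.ne').comp x hd1
    have := (hlog.neg.sub (hasDerivAt_id x)).sub ((hasDerivAt_pow 2 x).div_const 2)
    refine this.congr_deriv ?_
    field_simp
    ring
  · intro x hx
    rcases hx with ⟨hxa, hxb⟩
    have hx1 : (0:ℝ) < 1 - x := by linarith
    positivity

/-- `log x ≤ (x - 1/x)/2` for `x ≥ 1`. -/
private lemma log_le_half {x : ℝ} (hx : 1 ≤ x) :
    Real.log x ≤ (x - x⁻¹) / 2 := by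
  have h := mono_aux (f := fun t => (t - t⁻¹) / 2 - Real.log t)
      (f' := fun t => (t - 1) ^ 2 / (2 * t ^ 2)) (a := 1) (b := x) hx ?_ ?_
  · norm_num at h
    linarith
  · intro t ht
    have ht0 : (0:ℝ) < t := lt_of_lt_of_le one_pos ht.1
    have ha : HasDerivAt (fun s : ℝ => s⁻¹) (-(t ^ 2)⁻¹) t := hasDerivAt_inv ht0.ne'
    have h1 := (((hasDerivAt_id t).sub ha).div_const 2).sub (Real.hasDerivAt_log ht0.ne')
    refine h1.congr_deriv ?_
    field_simp
    ring
  · intro t ht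
    have ht0 : (0:ℝ) < t := lt_of_lt_of_le one_pos ht.1
    positivity

private lemma qh_eq (q ε : ℝ) (hq : 0 < q) :
    q * hFun (ε / q) = (q + ε) * Real.log ((q + ε) / q) - ε := by
  unfold hFun
  have h1 : 1 + ε / q = (q + ε) / q := by field_simp
  rw [h1]
  field_simp

/-- Middle inequality: `q·h(ε/q) ≤ D(q+ε ‖ q)` when `q+ε ≤ 1/2`. -/
private lemma mid_ineq (q ε : ℝ) (hq : 0 < q) (hε : 0 ≤ ε) (hpe : q + ε ≤ 1 / 2) :
    q * hFun (ε / q) ≤ klBern (q + ε) q := by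
  rw [qh_eq q ε hq]
  unfold klBern
  have ha : (0:ℝ) < 1 - (q + ε) := by linarith
  have hb : (0:ℝ) < 1 - q := by linarith
  have hlog : Real.log ((1 - q) / (1 - (q + ε))) ≤ (1 - q) / (1 - (q + ε)) - 1 :=
    Real.log_le_sub_one_of_pos (by positivity)
  have hlog2 : Real.log ((1 - (q + ε)) / (1 - q)) = -Real.log ((1 - q) / (1 - (q + ε))) := by
    rw [← Real.log_inv]
    congr 1
    rw [inv_div]
  have hmul : (1 - (q + ε)) * Real.log ((1 - (q + ε)) / (1 - q)) ≥ -ε := by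
    rw [hlog2]
    have h1 : (1 - (q + ε)) * ((1 - q) / (1 - (q + ε)) - 1) = ε := by
      field_simp
      ring
    nlinarith [mul_le_mul_of_nonneg_left hlog ha.le]
  linarith

set_option maxHeartbeats 1000000 in
theorem stmt16 :
    (∀ q ε : ℝ, 0 < q → q ≤ 1 / 4 → 0 ≤ ε → ε ≤ 1 / 4 → 8 * q ≤ ε →
      ε / 2 * Real.log (ε / q) ≤ q * hFun (ε / q) ∧
      q * hFun (ε / q) ≤ klBern (q + ε) q ∧
      klBern (q + ε) q ≤ 2 * ε * Real.log (ε / q)) ∧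
    (∀ q ε : ℝ, 0 < q → q ≤ 1 → 0 ≤ ε → ε ≤ 1 → q + ε ≤ 1 / 2 →
      ε ^ 2 / (2 * (q + ε)) ≤ q * hFun (ε / q) ∧
      q * hFun (ε / q) ≤ klBern (q + ε) q ∧
      klBern (q + ε) q ≤ ε ^ 2 / q) := by
  constructor
  · intro q ε hq hq4 hε hε4 h8
    have hεpos : 0 < ε := by nlinarith
    have hx8 : (8:ℝ) ≤ ε / q := by rw [le_div_iff₀ hq]; linarith
    have hxpos : (0:ℝ) < ε / q := by positivity
    have hexp2 : Real.exp 2 < 8 := by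
      have h1 : Real.exp 2 = Real.exp 1 * Real.exp 1 := by
        rw [← Real.exp_add]; norm_num
      have h2 := Real.exp_one_lt_d9
      nlinarith [Real.exp_pos 1]
    have hL2 : (2:ℝ) ≤ Real.log (ε / q) := by
      rw [Real.le_log_iff_exp_le hxpos]
      linarith
    have hLmono : Real.log (ε / q) ≤ Real.log ((q + ε) / q) := by
      apply Real.log_le_log hxpos
      gcongr
      linarith
    refine ⟨?_, mid_ineq q ε hq hε (by linarith), ?_⟩
    · rw [qh_eq q ε hq]
      nlinarith [mul_le_mul_of_nonneg_left hLmono (by positivity : (0:ℝ) ≤ q + ε),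
        mul_le_mul_of_nonneg_left hL2 hε]
    · unfold klBern
      have ha : (0:ℝ) < 1 - (q + ε) := by linarith
      have hb : (0:ℝ) < 1 - q := by linarith
      have hterm2 : (1 - (q + ε)) * Real.log ((1 - (q + ε)) / (1 - q)) ≤ 0 := by
        apply mul_nonpos_of_nonneg_of_nonpos ha.le
        apply Real.log_nonpos (by positivity)
        rw [div_le_one hb]; linarith
      have hpq1 : (1:ℝ) ≤ (q + ε) / q := by rw [le_div_iff₀ hq]; linarith
      have hLp : (0:ℝ) ≤ Real.log ((q + ε) / q) := Real.log_nonneg hpq1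
      have h32 : 2 * Real.log ((q + ε) / q) ≤ 3 * Real.log (ε / q) := by
        have hsq : ((q + ε) / q) ^ 2 ≤ (ε / q) ^ 3 := by
          rw [div_pow, div_pow, div_le_div_iff₀ (by positivity) (by positivity)]
          have h9 : (q + ε) ^ 2 ≤ 81 / 64 * ε ^ 2 := by nlinarith
          nlinarith [mul_le_mul_of_nonneg_right h9 (le_of_lt (pow_pos hq 3)),
            mul_nonneg (mul_nonneg (sq_nonneg ε) (sq_nonneg q))
              (show (0:ℝ) ≤ ε - 81 / 64 * q by linarith)]
        have := Real.log_le_log (by positivity) hsq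
        rw [Real.log_pow, Real.log_pow] at this
        push_cast at this
        linarith
      have hp98 : q + ε ≤ 9 / 8 * ε := by linarith
      nlinarith [mul_le_mul_of_nonneg_left h32 hεpos.le,
        mul_le_mul_of_nonneg_right hp98 hLp, hL2]
  · intro q ε hq hq1 hε hε1 hpe
    have hp : (0:ℝ) < q + ε := by linarith
    have hb : (0:ℝ) < 1 - q := by linarith
    have ha : (0:ℝ) < 1 - (q + ε) := by linarith
    refine ⟨?_, mid_ineq q ε hq hε hpe, ?_⟩
    · -- ε²/(2(q+ε)) ≤ q h(ε/q)
      rw [qh_eq q ε hq]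
      have hu0 : (0:ℝ) ≤ ε / (q + ε) := by positivity
      have hu1 : ε / (q + ε) < 1 := by rw [div_lt_one hp]; linarith
      have hk := key_log hu0 hu1
      have h1mu : 1 - ε / (q + ε) = q / (q + ε) := by field_simp; ring
      rw [h1mu] at hk
      have hlog : Real.log (q / (q + ε)) = -Real.log ((q + ε) / q) := by
        rw [← Real.log_inv]; congr 1; rw [inv_div]
      rw [hlog, neg_neg] at hk
      have h2 : (q + ε) * (ε / (q + ε) + (ε / (q + ε)) ^ 2 / 2) = ε + ε ^ 2 / (2 * (q + ε)) := by
        field_simp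
      nlinarith [mul_le_mul_of_nonneg_left hk hp.le]
    · -- klBern ≤ ε²/q
      unfold klBern
      -- first term
      have hx1 : (1:ℝ) ≤ (q + ε) / q := by rw [le_div_iff₀ hq]; linarith
      have hf := log_le_half hx1
      have hfirst : (q + ε) * Real.log ((q + ε) / q) ≤ ε + ε ^ 2 / (2 * q) := by
        have heq : (q + ε) * (((q + ε) / q - ((q + ε) / q)⁻¹) / 2) = ε + ε ^ 2 / (2 * q) := by
          field_simp
          ring
        nlinarith [mul_le_mul_of_nonneg_left hf hp.le]
      -- second term
      have hu0 : (0:ℝ) ≤ ε / (1 - q) := by positivity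
      have hu1 : ε / (1 - q) < 1 := by rw [div_lt_one hb]; linarith
      have hk := key_log hu0 hu1
      have h1mu : 1 - ε / (1 - q) = (1 - (q + ε)) / (1 - q) := by field_simp; ring
      rw [h1mu] at hk
      have hsecond : (1 - (q + ε)) * Real.log ((1 - (q + ε)) / (1 - q)) ≤
          -((1 - (q + ε)) * (ε / (1 - q) + (ε / (1 - q)) ^ 2 / 2)) := by
        have hlogle : Real.log ((1 - (q + ε)) / (1 - q)) ≤ -(ε / (1 - q) + (ε / (1 - q)) ^ 2 / 2) := by
          linarith
        nlinarith [mul_le_mul_of_nonneg_left hlogle ha.le]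
      have halg : ε ^ 2 / q - (ε + ε ^ 2 / (2 * q) - (1 - (q + ε)) * (ε / (1 - q) + (ε / (1 - q)) ^ 2 / 2))
          = ε ^ 2 * ((1 - q) * (1 - 2 * q) - q * ε) / (2 * q * (1 - q) ^ 2) := by
        field_simp
        ring
      have hnum : (0:ℝ) ≤ (1 - q) * (1 - 2 * q) - q * ε := by
        nlinarith
      have hfrac : (0:ℝ) ≤ ε ^ 2 * ((1 - q) * (1 - 2 * q) - q * ε) / (2 * q * (1 - q) ^ 2) := by
        positivity
      linarith
end

section
/- For all 0 ≤ ε ≤ 1/2 and 0 < q ≤ 1/2, one has q·h(ε/q) ≥ D(q + ε/2 ‖ q). -/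
lemma deriv_F (q : ℝ) (hq0 : 0 < q) (hq1 : q ≤ 1 / 2) (t : ℝ) (ht0 : 0 ≤ t)
    (ht1 : t ≤ 1 / 2) :
    HasDerivAt (fun t => q * hFun (t / q) - klBern (q + t / 2) q)
      (Real.log (1 + t / q) - (1 / 2) * Real.log ((q + t / 2) / q)
        + (1 / 2) * Real.log ((1 - (q + t / 2)) / (1 - q))) t := by
  have hq : q ≠ 0 := ne_of_gt hq0
  have h1 : (0 : ℝ) < 1 + t / q := by
    have := div_nonneg ht0 hq0.le; linarith
  have h2 : (0 : ℝ) < q + t / 2 := by linarith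
  have h3 : (0 : ℝ) < 1 - (q + t / 2) := by linarith
  have h4 : (0 : ℝ) < 1 - q := by linarith
  have hu : HasDerivAt (fun t : ℝ => 1 + t / q) (1 / q) t := by
    simpa using ((hasDerivAt_id t).div_const q).const_add 1
  have hlu : HasDerivAt (fun t : ℝ => Real.log (1 + t / q)) ((1 / q) / (1 + t / q)) t :=
    hu.log (ne_of_gt h1)
  have hA : HasDerivAt (fun t : ℝ => q * hFun (t / q))
      (q * ((1 / q) * Real.log (1 + t / q) + (1 + t / q) * ((1 / q) / (1 + t / q)) - 1 / q)) t := by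
    unfold hFun
    exact ((hu.mul hlu).sub (((hasDerivAt_id t).div_const q))).const_mul q
  have hv : HasDerivAt (fun t : ℝ => q + t / 2) (1 / 2) t := by
    simpa using ((hasDerivAt_id t).div_const 2).const_add q
  have hw : HasDerivAt (fun t : ℝ => (q + t / 2) / q) ((1 / 2) / q) t := hv.div_const q
  have hlw : HasDerivAt (fun t : ℝ => Real.log ((q + t / 2) / q))
      (((1 / 2) / q) / ((q + t / 2) / q)) t := hw.log (by positivity)
  have hB : HasDerivAt (fun t : ℝ => (q + t / 2) * Real.log ((q + t / 2) / q))
      ((1 / 2) * Real.log ((q + t / 2) / q) + (q + t / 2) * (((1 / 2) / q) / ((q + t / 2) / q))) t :=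
    hv.mul hlw
  have hs : HasDerivAt (fun t : ℝ => 1 - (q + t / 2)) (-(1 / 2)) t := hv.const_sub 1
  have hr : HasDerivAt (fun t : ℝ => (1 - (q + t / 2)) / (1 - q)) (-(1 / 2) / (1 - q)) t :=
    hs.div_const (1 - q)
  have hlr : HasDerivAt (fun t : ℝ => Real.log ((1 - (q + t / 2)) / (1 - q)))
      ((-(1 / 2) / (1 - q)) / ((1 - (q + t / 2)) / (1 - q))) t := hr.log (by positivity)
  have hC : HasDerivAt (fun t : ℝ => (1 - (q + t / 2)) * Real.log ((1 - (q + t / 2)) / (1 - q)))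
      ((-(1 / 2)) * Real.log ((1 - (q + t / 2)) / (1 - q))
        + (1 - (q + t / 2)) * ((-(1 / 2) / (1 - q)) / ((1 - (q + t / 2)) / (1 - q)))) t :=
    hs.mul hlr
  have := hA.sub (hB.add hC)
  unfold klBern
  convert this using 1
  case e'_4 => rfl
  case e'_5 => rfl
  case e'_8 => rfl
  have h1' : (1 : ℝ) + t / q ≠ 0 := ne_of_gt h1
  have h2' : q + t / 2 ≠ 0 := ne_of_gt h2
  have h3' : (1 : ℝ) - (q + t / 2) ≠ 0 := ne_of_gt h3
  have h4' : (1 : ℝ) - q ≠ 0 := ne_of_gt h4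
  have e1 : (1 + t / q) * (1 / q / (1 + t / q)) = 1 / q :=
    mul_div_cancel₀ _ h1'
  have e2 : (q + t / 2) * (1 / 2 / q / ((q + t / 2) / q)) = 1 / 2 := by
    rw [div_div_div_eq]
    field_simp
  have e3 : (1 - (q + t / 2)) * (-(1 / 2) / (1 - q) / ((1 - (q + t / 2)) / (1 - q))) = -(1 / 2) := by
    have h5 : (2 : ℝ) - (q * 2 + t) ≠ 0 := by intro h; nlinarith
    field_simp [h5]
  rw [e1, e2, e3]
  field_simp
  ring

lemma deriv_nonneg (q : ℝ) (hq0 : 0 < q) (hq1 : q ≤ 1 / 2) (t : ℝ) (ht0 : 0 ≤ t)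
    (ht1 : t ≤ 1 / 2) :
    0 ≤ Real.log (1 + t / q) - (1 / 2) * Real.log ((q + t / 2) / q)
        + (1 / 2) * Real.log ((1 - (q + t / 2)) / (1 - q)) := by
  have h1 : (0 : ℝ) < 1 + t / q := by
    have := div_nonneg ht0 hq0.le; linarith
  have h2 : (0 : ℝ) < q + t / 2 := by linarith
  have h3 : (0 : ℝ) < 1 - (q + t / 2) := by linarith
  have h4 : (0 : ℝ) < 1 - q := by linarith
  have hB : (0 : ℝ) < (q + t / 2) / q := by positivity
  have key : (q + t / 2) / q ≤ (1 + t / q) ^ 2 * ((1 - (q + t / 2)) / (1 - q)) := by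
    have hpoly : (q + t / 2) * (1 - q) * q ≤ (q + t) ^ 2 * (1 - (q + t / 2)) := by
      nlinarith [sq_nonneg (t - q), sq_nonneg t, sq_nonneg (q + t),
        mul_nonneg ht0 (sub_nonneg.2 hq1), mul_nonneg ht0 ht0,
        mul_nonneg (mul_nonneg ht0 ht0) ht0,
        mul_nonneg (mul_nonneg ht0 hq0.le) (sub_nonneg.2 ht1),
        mul_nonneg (mul_nonneg hq0.le hq0.le) (sub_nonneg.2 hq1),
        mul_nonneg (mul_nonneg ht0 ht0) (sub_nonneg.2 ht1)]
    have hexp : (1 + t / q) ^ 2 * ((1 - (q + t / 2)) / (1 - q))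
        = (q + t) ^ 2 * (1 - (q + t / 2)) / (q ^ 2 * (1 - q)) := by
      have hq' : 1 + t / q = (q + t) / q := by rw [add_div, div_self hq0.ne']
      rw [hq', div_pow, div_mul_div_comm]
    rw [hexp, div_le_div_iff₀ hq0 (by positivity)]
    nlinarith [mul_le_mul_of_nonneg_right hpoly hq0.le]
  have hlog := Real.log_le_log hB key
  have hsplit : Real.log ((1 + t / q) ^ 2 * ((1 - (q + t / 2)) / (1 - q)))
      = 2 * Real.log (1 + t / q) + Real.log ((1 - (q + t / 2)) / (1 - q)) := by
    rw [Real.log_mul (by positivity) (by positivity), Real.log_pow]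
    push_cast; ring
  rw [hsplit] at hlog
  linarith

theorem stmt17 (q ε : ℝ) (hε0 : 0 ≤ ε) (hε1 : ε ≤ 1 / 2) (hq0 : 0 < q) (hq1 : q ≤ 1 / 2) :
    klBern (q + ε / 2) q ≤ q * hFun (ε / q) := by
  set F : ℝ → ℝ := fun t => q * hFun (t / q) - klBern (q + t / 2) q with hF
  have mono : MonotoneOn F (Set.Icc 0 (1 / 2)) := by
    apply monotoneOn_of_deriv_nonneg (convex_Icc _ _)
    · intro t ht
      exact (deriv_F q hq0 hq1 t ht.1 ht.2).continuousAt.continuousWithinAt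
    · intro t ht
      rw [interior_Icc] at ht
      exact (deriv_F q hq0 hq1 t ht.1.le ht.2.le).differentiableAt.differentiableWithinAt
    · intro t ht
      rw [interior_Icc] at ht
      rw [(deriv_F q hq0 hq1 t ht.1.le ht.2.le).deriv]
      exact deriv_nonneg q hq0 hq1 t ht.1.le ht.2.le
  have hF0 : F 0 = 0 := by
    simp only [hF]
    have : klBern q q = 0 := by
      unfold klBern
      rw [div_self (ne_of_gt hq0), div_self (by linarith : (1 : ℝ) - q ≠ 0), Real.log_one]
      ring
    simp [hFun, this]
  have h := mono (Set.mem_Icc.2 ⟨le_refl 0, by norm_num⟩) (Set.mem_Icc.2 ⟨hε0, hε1⟩) hε0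
  rw [hF0] at h
  simp only [hF] at h
  linarith
end
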